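/- In the Grassmann algebra E of an infinite-dimensional vector space over a field F of characteristic zero, every multilinear polynomial f(x_1,...,x_m) is, modulo the T-ideal generated by the identity [x_1,x_2,x_3] = 0, equal to a linear combination Σ β_{i,j} x_{i_1}···x_{i_{m-2p}} [x_{j_1},x_{j_2}]···[x_{j_{2p-1}},x_{j_{2p}}], where the sum runs over all splittings of {1,...,m} into an increasing sequence i_1 < ... < i_{m-2p} and an increasing sequence j_1 < j_2 < ... < j_{2p}. -/

import Mathlib

/-- Evaluation of a noncommutative polynomial in `n` variables at elements of `A`. -/
noncomputable def polyEval {F : Type*} [CommSemiring F] {A : Type*} [Semiring A] [Algebra F A]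
    {n : ℕ} (f : FreeAlgebra F (Fin n)) (v : Fin n → A) : A :=
  FreeAlgebra.lift F v f

/-- `f` is a polynomial identity for `A`. -/
def IsIdPoly (F : Type*) [CommSemiring F] (A : Type*) [Semiring A] [Algebra F A]
    {n : ℕ} (f : FreeAlgebra F (Fin n)) : Prop :=
  ∀ v : Fin n → A, polyEval f v = 0

/-- `f` is a central polynomial for `A`. -/
def IsCentralPoly (F : Type*) [CommSemiring F] (A : Type*) [Semiring A] [Algebra F A]
    {n : ℕ} (f : FreeAlgebra F (Fin n)) : Prop :=
  ∀ v : Fin n → A, polyEval f v ∈ Set.center A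

/-- `f` is a proper central polynomial for `A`. -/
def IsProperCentralPoly (F : Type*) [CommSemiring F] (A : Type*) [Semiring A] [Algebra F A]
    {n : ℕ} (f : FreeAlgebra F (Fin n)) : Prop :=
  IsCentralPoly F A f ∧ ¬ IsIdPoly F A f

/-- The product `f·g` of two polynomials in disjoint sets of variables. -/
noncomputable def disjProd {F : Type*} [CommSemiring F] {r s : ℕ}
    (f : FreeAlgebra F (Fin r)) (g : FreeAlgebra F (Fin s)) : FreeAlgebra F (Fin (r + s)) :=
  FreeAlgebra.lift F (fun i => FreeAlgebra.ι F (Fin.castAdd s i)) f *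
    FreeAlgebra.lift F (fun i => FreeAlgebra.ι F (Fin.natAdd r i)) g

/-- `A` has the primeness property on central polynomials. -/
def HasPrimeness (F : Type*) [CommSemiring F] (A : Type*) [Semiring A] [Algebra F A] : Prop :=
  (∃ (n : ℕ) (f : FreeAlgebra F (Fin n)), IsProperCentralPoly F A f) ∧
    ∀ (r s : ℕ) (f : FreeAlgebra F (Fin r)) (g : FreeAlgebra F (Fin s)),
      IsProperCentralPoly F A (disjProd f g) →
        IsProperCentralPoly F A f ∧ IsProperCentralPoly F A g

/-- The multilinear polynomial `∑ σ, λ σ • x_{σ(1)} ⋯ x_{σ(n)}`. -/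
noncomputable def mlin {F : Type*} [CommSemiring F] {n : ℕ} (lam : Equiv.Perm (Fin n) → F) :
    FreeAlgebra F (Fin n) :=
  ∑ σ : Equiv.Perm (Fin n), lam σ • (List.ofFn fun i => FreeAlgebra.ι F (σ i)).prod

/-- Direct evaluation of the multilinear polynomial with coefficients `lam`. -/
noncomputable def mlinEval {F : Type*} [CommSemiring F] {A : Type*} [Semiring A] [Algebra F A]
    {n : ℕ} (lam : Equiv.Perm (Fin n) → F) (v : Fin n → A) : A :=
  ∑ σ : Equiv.Perm (Fin n), lam σ • (List.ofFn fun i => v (σ i)).prod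

/-- The product of commutators `[x_{j₁},x_{j₂}]⋯[x_{j_{2p-1}},x_{j_{2p}}]` built from a list of
variables paired off consecutively. -/
noncomputable def pairProd {F : Type*} [CommRing F] {m : ℕ} :
    List (Fin m) → FreeAlgebra F (Fin m)
  | a :: b :: t =>
      (FreeAlgebra.ι F a * FreeAlgebra.ι F b - FreeAlgebra.ι F b * FreeAlgebra.ι F a) * pairProd t
  | _ => 1

/-- The summand `x_{i₁}⋯x_{i_{m-2p}}[x_{j₁},x_{j₂}]⋯[x_{j_{2p-1}},x_{j_{2p}}]` associated to the
set `J` of commutator variables (both blocks taken in increasing order). -/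
noncomputable def splitTerm {F : Type*} [CommRing F] {m : ℕ} (J : Finset (Fin m)) :
    FreeAlgebra F (Fin m) :=
  ((Jᶜ.sort (· ≤ ·)).map (FreeAlgebra.ι F)).prod * pairProd (J.sort (· ≤ ·))

/-- The triple commutator `[[x₁,x₂],x₃]` as a noncommutative polynomial. -/
noncomputable def tripleComm (F : Type*) [CommRing F] : FreeAlgebra F (Fin 3) :=
  (FreeAlgebra.ι F 0 * FreeAlgebra.ι F 1 - FreeAlgebra.ι F 1 * FreeAlgebra.ι F 0) *
      FreeAlgebra.ι F 2 -
    FreeAlgebra.ι F 2 *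
      (FreeAlgebra.ι F 0 * FreeAlgebra.ι F 1 - FreeAlgebra.ι F 1 * FreeAlgebra.ι F 0)

namespace GP
variable (F : Type*) [Field F] (m : ℕ)

def TI : TwoSidedIdeal (FreeAlgebra F (Fin m)) :=
  TwoSidedIdeal.span {y | ∃ v : Fin 3 → FreeAlgebra F (Fin m), y = polyEval (tripleComm F) v}

def cm (a b : Fin m) : FreeAlgebra F (Fin m) :=
  FreeAlgebra.ι F a * FreeAlgebra.ι F b - FreeAlgebra.ι F b * FreeAlgebra.ι F a

variable {F m}

lemma tc_mem (x y z : FreeAlgebra F (Fin m)) :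
    (x*y - y*x)*z - z*(x*y - y*x) ∈ TI F m := by
  apply TwoSidedIdeal.subset_span
  exact ⟨![x, y, z], by simp [polyEval, tripleComm]⟩

lemma mix (a b c d : FreeAlgebra F (Fin m)) :
    (a*b - b*a)*(c*d - d*c) + (a*c - c*a)*(b*d - d*b) ∈ TI F m := by
  have h1 := tc_mem a (b*c) d
  have h2 := (TI F m).mul_mem_right _ c (tc_mem a b d)
  have h3 := (TI F m).mul_mem_left b _ (tc_mem a c d)
  have h4 := tc_mem b d (a*c - c*a)
  have key : (a*b - b*a)*(c*d - d*c) + (a*c - c*a)*(b*d - d*b)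
      = ((a*(b*c) - (b*c)*a)*d - d*(a*(b*c) - (b*c)*a))
        - ((a*b - b*a)*d - d*(a*b - b*a))*c
        - b*((a*c - c*a)*d - d*(a*c - c*a))
        - ((b*d - d*b)*(a*c - c*a) - (a*c - c*a)*(b*d - d*b)) := by
    noncomm_ring
  rw [key]
  exact (TI F m).sub_mem ((TI F m).sub_mem ((TI F m).sub_mem h1 h2) h3) h4

/-- `x ≡ ±y` modulo the T-ideal. -/
def Rel (x y : FreeAlgebra F (Fin m)) : Prop :=
  x - y ∈ TI F m ∨ x + y ∈ TI F m

lemma Rel.refl (x : FreeAlgebra F (Fin m)) : Rel x x := Or.inl (by simp)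

lemma rel_of_eq {x y : FreeAlgebra F (Fin m)} (h : x = y) : Rel x y := h ▸ Rel.refl x

lemma Rel.trans {x y z : FreeAlgebra F (Fin m)} (h1 : Rel x y) (h2 : Rel y z) : Rel x z := by
  rcases h1 with h1 | h1 <;> rcases h2 with h2 | h2
  · exact Or.inl (by have := (TI F m).add_mem h1 h2; simpa using this)
  · refine Or.inr ?_; have := (TI F m).add_mem h1 h2
    have e : x + z = x - y + (y + z) := by abel
    rwa [e]
  · refine Or.inr ?_; have := (TI F m).sub_mem h1 h2
    have e : x + z = x + y - (y - z) := by abel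
    rwa [e]
  · refine Or.inl ?_; have := (TI F m).sub_mem h1 h2
    have e : x - z = x + y - (y + z) := by abel
    rwa [e]

lemma Rel.mul_left (c : FreeAlgebra F (Fin m)) {x y : FreeAlgebra F (Fin m)} (h : Rel x y) :
    Rel (c * x) (c * y) := by
  rcases h with h | h
  · exact Or.inl (by simpa [mul_sub] using (TI F m).mul_mem_left c _ h)
  · exact Or.inr (by simpa [mul_add] using (TI F m).mul_mem_left c _ h)

@[simp] lemma pairProd_nil : pairProd ([] : List (Fin m)) = (1 : FreeAlgebra F (Fin m)) := rfl
@[simp] lemma pairProd_single (a : Fin m) :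
    pairProd [a] = (1 : FreeAlgebra F (Fin m)) := rfl
lemma pairProd_cons (a b : Fin m) (t : List (Fin m)) :
    pairProd (a :: b :: t) = cm F m a b * pairProd t := rfl

lemma pairProd_append : ∀ (u : List (Fin m)), Even u.length →
    ∀ v : List (Fin m), pairProd (F := F) (u ++ v) = pairProd u * pairProd v
  | [], _, v => by simp
  | [a], h, v => by simp at h
  | a :: b :: u, h, v => by
    have h' : Even u.length := by
      rcases h with ⟨k, hk⟩
      exact ⟨k - 1, by simp at hk; omega⟩
    simp only [List.cons_append, pairProd_cons, pairProd_append u h' v, mul_assoc]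

lemma adjSwap : ∀ (u : List (Fin m)) (a b : Fin m) (v : List (Fin m)),
    Even (u.length + v.length) →
    Rel (pairProd (F := F) (u ++ a :: b :: v)) (pairProd (u ++ b :: a :: v))
  | [], a, b, v, _ => by
    refine Or.inr ?_
    have : pairProd (F := F) (a :: b :: v) + pairProd (b :: a :: v) = 0 := by
      simp only [List.nil_append, pairProd_cons, cm]
      noncomm_ring
    simp only [List.nil_append]
    rw [this]
    exact (TI F m).zero_mem
  | [p], a, b, v, h => by
    match v with
    | [] => simp at h
    | q :: v' =>
      refine Or.inr ?_
      have e : pairProd (F := F) ([p] ++ a :: b :: q :: v') + pairProd ([p] ++ b :: a :: q :: v')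
          = (cm F m p a * cm F m b q + cm F m p b * cm F m a q) * pairProd v' := by
        simp only [List.cons_append, List.nil_append, pairProd_cons]
        noncomm_ring
      rw [e]
      exact (TI F m).mul_mem_right _ _ (mix _ _ _ _)
  | x :: y :: u, a, b, v, h => by
    have h' : Even (u.length + v.length) := by
      rcases h with ⟨k, hk⟩
      exact ⟨k - 1, by simp at hk; omega⟩
    have := (adjSwap u a b v h').mul_left (cm F m x y)
    simpa only [List.cons_append, pairProd_cons] using this

lemma bubbleMid (u : List (Fin m)) (c : Fin m) :
    ∀ (p q : List (Fin m)), Even (u.length + p.length + q.length + 1) →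
    Rel (pairProd (F := F) (u ++ p ++ c :: q)) (pairProd (u ++ c :: (p ++ q))) := by
  intro p
  induction p using List.reverseRecOn with
  | nil => intro q h; exact rel_of_eq (by simp)
  | append_singleton p' x IH =>
    intro q h
    have hpar : Even ((u ++ p').length + q.length) := by
      rcases h with ⟨k, hk⟩
      simp only [List.length_append, List.length_cons, List.length_nil] at hk ⊢
      exact ⟨k - 1, by omega⟩
    have s1 := adjSwap (F := F) (u ++ p') x c q hpar
    have e1 : u ++ (p' ++ [x]) ++ c :: q = (u ++ p') ++ x :: c :: q := by simp
    have e2 : (u ++ p') ++ c :: x :: q = u ++ p' ++ c :: (x :: q) := by simp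
    have hpar2 : Even (u.length + p'.length + (x :: q).length + 1) := by
      rcases h with ⟨k, hk⟩
      simp only [List.length_append, List.length_cons, List.length_nil] at hk ⊢
      exact ⟨k, by omega⟩
    have s2 := IH (x :: q) hpar2
    have e3 : u ++ c :: (p' ++ x :: q) = u ++ c :: (p' ++ [x] ++ q) := by simp
    rw [e1]
    exact (s1.trans (by rw [e2]; exact e3 ▸ s2))

lemma permRel : ∀ (n : ℕ) (L1 L2 : List (Fin m)), L1.length = n → Even n → L1.Perm L2 →
    Rel (pairProd (F := F) L1) (pairProd L2) := by
  intro n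
  induction n using Nat.strong_induction_on with
  | _ n IH =>
    intro L1 L2 hlen heven hperm
    match L2 with
    | [] => exact rel_of_eq (by rw [hperm.eq_nil])
    | [c] =>
      exfalso
      have : n = 1 := by rw [← hlen, hperm.length_eq]; rfl
      rw [this] at heven; exact (Nat.not_even_iff_odd.2 odd_one) heven
    | c :: d :: M2 =>
      have hc : c ∈ L1 := hperm.mem_iff.2 (by simp)
      obtain ⟨p, q, rfl⟩ := List.append_of_mem hc
      have hpar1 : Even (([] : List (Fin m)).length + p.length + q.length + 1) := by
        simp only [List.length_nil]
        have : p.length + q.length + 1 = n := by simp at hlen; omega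
        simpa [this] using heven
      have R1 := bubbleMid (F := F) ([] : List (Fin m)) c p q hpar1
      simp only [List.nil_append] at R1
      -- p ++ q ~ d :: M2
      have hperm2 : (p ++ q).Perm (d :: M2) :=
        (List.perm_middle.symm.trans hperm).cons_inv
      have hd : d ∈ p ++ q := hperm2.mem_iff.2 (by simp)
      obtain ⟨p2, q2, hpq⟩ := List.append_of_mem hd
      have hpar2 : Even ([c].length + p2.length + q2.length + 1) := by
        have hl : p2.length + q2.length + 1 = p.length + q.length := by
          have := congrArg List.length hpq
          simp at this; omega
        have : p.length + q.length + 1 = n := by simp at hlen; omega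
        simp only [List.length_cons, List.length_nil]
        rcases heven with ⟨k, hk⟩
        exact ⟨k, by omega⟩
      have R2 := bubbleMid (F := F) [c] d p2 q2 hpar2
      simp only [List.cons_append, List.nil_append] at R2
      rw [← hpq] at R2
      have hperm3 : (p2 ++ q2).Perm M2 := by
        have ha : (d :: (p2 ++ q2)).Perm (p2 ++ d :: q2) := List.perm_middle.symm
        have hb2 : (p2 ++ d :: q2).Perm (d :: M2) := by rw [← hpq]; exact hperm2
        exact (ha.trans hb2).cons_inv
      have hlen3 : (p2 ++ q2).length = n - 2 := by
        have := hperm3.length_eq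
        have h2 : (c :: d :: M2).length = n := by rw [← hperm.length_eq, hlen]
        simp at this h2 ⊢; omega
      have hn2 : n - 2 < n ∨ n = 0 := by omega
      have hnn : 2 ≤ n := by
        have h2 : (c :: d :: M2).length = n := by rw [← hperm.length_eq, hlen]
        simp at h2; omega
      have R3 : Rel (pairProd (F := F) (c :: d :: (p2 ++ q2))) (pairProd (c :: d :: M2)) := by
        rw [pairProd_cons, pairProd_cons]
        exact (IH (n - 2) (by omega) _ _ hlen3 (by rcases heven with ⟨k, hk⟩; exact ⟨k - 1, by omega⟩) hperm3).mul_left _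
      exact R1.trans (R2.trans R3)

lemma pair_perm_rel {L1 L2 : List (Fin m)} (h : L1.Perm L2) (he : Even L1.length) :
    Rel (pairProd (F := F) L1) (pairProd L2) :=
  permRel L1.length L1 L2 rfl he h

lemma claimB (a b : Fin m) (J : Finset (Fin m)) (ha : a ∉ J) (hb : b ∉ J) (hab : a ≠ b)
    (hJ : Even J.card) :
    Rel (pairProd (F := F) (J.sort (· ≤ ·) ++ [a, b]))
      (pairProd ((insert a (insert b J)).sort (· ≤ ·))) := by
  apply pair_perm_rel
  · have h1 : (J.sort (· ≤ ·) ++ [a, b]).Perm (a :: b :: J.sort (· ≤ ·)) :=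
      List.perm_append_comm
    have h2 : ((insert a (insert b J)).sort (· ≤ ·)).Perm ((insert a (insert b J)).toList) :=
      Finset.sort_perm_toList _ _
    have ha' : a ∉ insert b J := by simp [hab, ha]
    have h3 : (insert a (insert b J)).toList.Perm (a :: (insert b J).toList) :=
      Finset.toList_insert ha'
    have h4 : (insert b J).toList.Perm (b :: J.toList) := Finset.toList_insert hb
    have h5 : J.toList.Perm (J.sort (· ≤ ·)) := (Finset.sort_perm_toList _ _).symm
    exact h1.trans (((h2.trans (h3.trans ((h4.trans (h5.cons b)).cons a)))).symm)
  · simp only [List.length_append, Finset.length_sort]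
    rcases hJ with ⟨k, hk⟩; exact ⟨k + 1, by simp [hk]; omega⟩

/-! ### Submodule machinery -/

variable (F m) in
def Isub : Submodule F (FreeAlgebra F (Fin m)) where
  carrier := TI F m
  add_mem' := (TI F m).add_mem
  zero_mem' := (TI F m).zero_mem
  smul_mem' := fun r x hx => by
    rw [Algebra.smul_def]
    exact (TI F m).mul_mem_left _ _ hx

@[simp] lemma mem_Isub {x : FreeAlgebra F (Fin m)} : x ∈ Isub F m ↔ x ∈ TI F m := Iff.rfl

variable (F) in
def monProd (L : List (Fin m)) : FreeAlgebra F (Fin m) := (L.map (FreeAlgebra.ι F)).prod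

@[simp] lemma monProd_nil : monProd F ([] : List (Fin m)) = 1 := rfl
lemma monProd_cons (a : Fin m) (L : List (Fin m)) :
    monProd F (a :: L) = FreeAlgebra.ι F a * monProd F L := by simp [monProd]
lemma monProd_append (u v : List (Fin m)) :
    monProd F (u ++ v) = monProd F u * monProd F v := by simp [monProd]

variable (F) in
def Tset (S J0 : Finset (Fin m)) : Set (FreeAlgebra F (Fin m)) :=
  {x | ∃ D : Finset (Fin m), D ⊆ S ∧ Even D.card ∧
    x = monProd F ((S \ D).sort (· ≤ ·)) * pairProd ((J0 ∪ D).sort (· ≤ ·))}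

variable (F) in
def Tsub (S J0 : Finset (Fin m)) : Submodule F (FreeAlgebra F (Fin m)) :=
  Isub F m ⊔ Submodule.span F (Tset F S J0)

lemma TI_le_Tsub {S J0 : Finset (Fin m)} {x : FreeAlgebra F (Fin m)} (hx : x ∈ TI F m) :
    x ∈ Tsub F S J0 :=
  Submodule.mem_sup_left hx

lemma Tset_le_Tsub {S J0 : Finset (Fin m)} {x : FreeAlgebra F (Fin m)} (hx : x ∈ Tset F S J0) :
    x ∈ Tsub F S J0 :=
  Submodule.mem_sup_right (Submodule.subset_span hx)

lemma Tsub_congr {S J0 : Finset (Fin m)} {x y : FreeAlgebra F (Fin m)} (h : x - y ∈ TI F m)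
    (hx : x ∈ Tsub F S J0) : y ∈ Tsub F S J0 := by
  have : y = x - (x - y) := by abel
  rw [this]
  exact Submodule.sub_mem _ hx (TI_le_Tsub h)

lemma Tsub_rel {S J0 : Finset (Fin m)} {x y : FreeAlgebra F (Fin m)} (h : Rel x y)
    (hx : x ∈ Tsub F S J0) : y ∈ Tsub F S J0 := by
  rcases h with h | h
  · exact Tsub_congr h hx
  · have : y = (x + y) - x := by abel
    rw [this]
    exact Submodule.sub_mem _ (TI_le_Tsub h) hx

lemma liftMin {S J0 : Finset (Fin m)} {c : Fin m} (hcS : c ∉ S) (hle : ∀ y ∈ S, c ≤ y)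
    {x : FreeAlgebra F (Fin m)} (hx : x ∈ Tsub F S J0) :
    FreeAlgebra.ι F c * x ∈ Tsub F (insert c S) J0 := by
  rw [Tsub] at hx
  rcases Submodule.mem_sup.1 hx with ⟨i, hi, s, hs, rfl⟩
  rw [mul_add]
  refine Submodule.add_mem _ (TI_le_Tsub ((TI F m).mul_mem_left _ _ hi)) ?_
  refine Submodule.span_induction ?_ ?_ ?_ ?_ hs
  · rintro z ⟨D, hDS, hDeven, rfl⟩
    rw [← mul_assoc, ← monProd_cons]
    have hsort : c :: (S \ D).sort (· ≤ ·) = ((insert c S) \ D).sort (· ≤ ·) := by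
      have h1 : insert c (S \ D) = (insert c S) \ D := by
        ext i
        simp only [Finset.mem_insert, Finset.mem_sdiff]
        constructor
        · rintro (rfl | ⟨h1, h2⟩)
          · exact ⟨Or.inl rfl, fun hc => hcS (hDS hc)⟩
          · exact ⟨Or.inr h1, h2⟩
        · rintro ⟨rfl | h1, h2⟩
          · exact Or.inl rfl
          · exact Or.inr ⟨h1, h2⟩
      rw [← h1]
      exact (Finset.sort_insert (· ≤ ·) (fun b hb => hle b (Finset.mem_sdiff.1 hb).1)
        (fun hc => hcS (Finset.mem_sdiff.1 hc).1)).symm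
    rw [hsort]
    exact Tset_le_Tsub ⟨D, hDS.trans (Finset.subset_insert _ _), hDeven, rfl⟩
  · simp
  · intro a b _ _ ha hb
    rw [mul_add]; exact Submodule.add_mem _ ha hb
  · intro r a _ ha
    rw [mul_smul_comm]; exact Submodule.smul_mem _ _ ha

lemma Tsub_mono_pair {S J0 : Finset (Fin m)} {a c : Fin m} (haS : a ∉ S) (hcS : c ∉ S)
    (hac : a ≠ c) {x : FreeAlgebra F (Fin m)}
    (hx : x ∈ Tsub F S (insert a (insert c J0))) :
    x ∈ Tsub F (insert a (insert c S)) J0 := by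
  rw [Tsub] at hx ⊢
  refine SetLike.le_def.1 (sup_le_sup (le_refl (Isub F m)) (Submodule.span_mono ?_)) hx
  rintro z ⟨D, hDS, hDeven, rfl⟩
  refine ⟨insert a (insert c D), ?_, ?_, ?_⟩
  · intro i hi
    simp only [Finset.mem_insert] at hi ⊢
    rcases hi with rfl | rfl | hi
    · exact Or.inl rfl
    · exact Or.inr (Or.inl rfl)
    · exact Or.inr (Or.inr (hDS hi))
  · have haD : a ∉ insert c D := by
      simp only [Finset.mem_insert]
      rintro (rfl | h); exact hac rfl; exact haS (hDS h)
    have hcD : c ∉ D := fun h => hcS (hDS h)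
    rw [Finset.card_insert_of_notMem haD, Finset.card_insert_of_notMem hcD]
    rcases hDeven with ⟨k, hk⟩; exact ⟨k + 1, by omega⟩
  · have e1 : (insert a (insert c S)) \ (insert a (insert c D)) = S \ D := by
      ext i
      simp only [Finset.mem_sdiff, Finset.mem_insert, not_or]
      constructor
      · rintro ⟨rfl | rfl | h1, hna, hnc, hnD⟩
        · exact absurd rfl hna
        · exact absurd rfl hnc
        · exact ⟨h1, hnD⟩
      · rintro ⟨h1, h2⟩
        exact ⟨Or.inr (Or.inr h1), by rintro rfl; exact haS h1,
          by rintro rfl; exact hcS h1, h2⟩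
    have e2 : J0 ∪ (insert a (insert c D)) = (insert a (insert c J0)) ∪ D := by
      ext i
      simp only [Finset.mem_union, Finset.mem_insert]
      tauto
    rw [e1, e2]

lemma moveComm (z w : FreeAlgebra F (Fin m)) (a b : Fin m) :
    z * cm F m a b * w - z * (w * cm F m a b) ∈ TI F m := by
  have h := tc_mem (FreeAlgebra.ι F a) (FreeAlgebra.ι F b) w
  have e : z * cm F m a b * w - z * (w * cm F m a b)
      = z * (cm F m a b * w - w * cm F m a b) := by
    noncomm_ring
  rw [e]
  exact (TI F m).mul_mem_left _ _ h

lemma monSwap (u v : List (Fin m)) (a b : Fin m) :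
    monProd F (u ++ a :: b :: v)
      = monProd F (u ++ b :: a :: v) + monProd F u * cm F m a b * monProd F v := by
  simp only [monProd_append, monProd_cons, cm]
  noncomm_ring

lemma Tsub_congr' {S J0 : Finset (Fin m)} {x y : FreeAlgebra F (Fin m)} (h : x - y ∈ TI F m)
    (hy : y ∈ Tsub F S J0) : x ∈ Tsub F S J0 := by
  have : x = y + (x - y) := by abel
  rw [this]
  exact Submodule.add_mem _ hy (TI_le_Tsub h)

lemma claimQ : ∀ (n : ℕ) (L : List (Fin m)) (J0 : Finset (Fin m)), L.length = n →
    L.Nodup → (∀ i ∈ L, i ∉ J0) → Even J0.card →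
    monProd F L * pairProd (J0.sort (· ≤ ·)) ∈ Tsub F L.toFinset J0 := by
  intro n
  induction n using Nat.strong_induction_on with
  | _ n IH =>
  intro L J0 hlen hnodup hdisj heven
  rcases eq_or_ne L [] with rfl | hne
  · exact Tset_le_Tsub ⟨∅, by simp, by simp, by simp⟩
  · obtain ⟨c, hcL, hcmin⟩ : ∃ c ∈ L, ∀ i ∈ L, c ≤ i := by
      obtain ⟨a0, ha0⟩ := List.exists_mem_of_ne_nil L hne
      have hSne : L.toFinset.Nonempty := ⟨a0, List.mem_toFinset.2 ha0⟩
      exact ⟨L.toFinset.min' hSne, List.mem_toFinset.1 (Finset.min'_mem _ _),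
        fun i hi => Finset.min'_le _ _ (List.mem_toFinset.2 hi)⟩
    obtain ⟨p, q, hL⟩ := List.append_of_mem hcL
    subst hL
    clear hne hcL
    induction p using List.reverseRecOn generalizing q with
    | nil =>
      simp only [List.nil_append] at hlen hnodup hdisj hcmin ⊢
      have hq : q.length = n - 1 := by simp at hlen; omega
      have hn1 : 1 ≤ n := by simp at hlen; omega
      have hmem := IH (n - 1) (by omega) q J0 hq hnodup.of_cons
        (fun i hi => hdisj i (List.mem_cons_of_mem _ hi)) heven
      have hlift := liftMin (S := q.toFinset) (J0 := J0) (c := c)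
        (by simpa using (List.nodup_cons.1 hnodup).1)
        (fun y hy => hcmin y (List.mem_cons_of_mem _ (List.mem_toFinset.1 hy))) hmem
      rw [List.toFinset_cons]
      have e : monProd F (c :: q) * pairProd (J0.sort (· ≤ ·))
          = FreeAlgebra.ι F c * (monProd F q * pairProd (J0.sort (· ≤ ·))) := by
        rw [monProd_cons, mul_assoc]
      rw [e]
      exact hlift
    | append_singleton p' x IHp =>
      have elist : p' ++ [x] ++ c :: q = p' ++ x :: c :: q := by simp
      rw [elist] at hlen hnodup hdisj hcmin ⊢
      -- basic facts
      have perm0 : (p' ++ x :: c :: q).Perm (x :: c :: (p' ++ q)) := by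
        have h1 : (p' ++ x :: c :: q).Perm (x :: (p' ++ c :: q)) := List.perm_middle
        have h2 : (p' ++ c :: q).Perm (c :: (p' ++ q)) := List.perm_middle
        exact h1.trans ((h2.cons x))
      have hnodup0 : (x :: c :: (p' ++ q)).Nodup := perm0.nodup_iff.1 hnodup
      have hxne : x ≠ c := by
        intro h; rw [List.nodup_cons] at hnodup0; exact hnodup0.1 (h ▸ by simp)
      have hxpq : x ∉ p' ++ q := by
        rw [List.nodup_cons] at hnodup0; simpa [hxne] using hnodup0.1
      have hcpq : c ∉ p' ++ q := by
        rw [List.nodup_cons] at hnodup0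
        have := hnodup0.2; rw [List.nodup_cons] at this; exact this.1
      have hxJ0 : x ∉ J0 := hdisj x (by simp)
      have hcJ0 : c ∉ J0 := hdisj c (by simp)
      have hnodup_pq : (p' ++ q).Nodup := by
        rw [List.nodup_cons] at hnodup0
        exact hnodup0.2.of_cons
      -- term 1 : the swapped monomial
      have perm1 : (p' ++ x :: c :: q).Perm (p' ++ c :: x :: q) :=
        List.Perm.append_left p' (List.Perm.swap _ _ _)
      have hterm1 : monProd F (p' ++ c :: x :: q) * pairProd (J0.sort (· ≤ ·)) ∈
          Tsub F (p' ++ x :: c :: q).toFinset J0 := by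
        rw [List.toFinset_eq_of_perm _ _ perm1]
        exact IHp (x :: q) (by rw [← perm1.length_eq]; exact hlen)
          (perm1.nodup_iff.1 hnodup)
          (fun i hi => hdisj i (perm1.mem_iff.2 hi))
          (fun i hi => hcmin i (perm1.mem_iff.2 hi))
      -- term 2 : the commutator correction
      have hn2 : 2 ≤ n := by
        rw [← hlen]; simp; omega
      have hJ0' : Even (insert x (insert c J0)).card := by
        rw [Finset.card_insert_of_notMem (by simp [hxne, hxJ0]),
          Finset.card_insert_of_notMem hcJ0]
        rcases heven with ⟨k, hk⟩; exact ⟨k + 1, by omega⟩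
      have hmem2 := IH (n - 2) (by omega) (p' ++ q) (insert x (insert c J0))
        (by have := perm0.length_eq; rw [this] at hlen; simp at hlen ⊢; omega)
        hnodup_pq
        (by
          intro i hi
          simp only [Finset.mem_insert, not_or]
          refine ⟨?_, ?_, hdisj i (perm0.mem_iff.2 (by simp [hi]))⟩
          · rintro rfl; exact hxpq hi
          · rintro rfl; exact hcpq hi)
        hJ0'
      -- move it into Tsub over the full variable set
      have hmono := Tsub_mono_pair (a := x) (c := c)
        (by simpa using hxpq) (by simpa using hcpq) hxne hmem2
      have hTF : insert x (insert c (p' ++ q).toFinset) = (p' ++ x :: c :: q).toFinset := by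
        rw [List.toFinset_eq_of_perm _ _ perm0]
        simp
      rw [hTF] at hmono
      -- relate pairProd ((insert x (insert c J0)).sort) with pairProd (J0.sort ++ [x, c])
      have hrelB := claimB (F := F) x c J0 hxJ0 hcJ0 hxne heven
      have hmemB : monProd F (p' ++ q) * pairProd (J0.sort (· ≤ ·) ++ [x, c]) ∈
          Tsub F (p' ++ x :: c :: q).toFinset J0 := by
        refine Tsub_rel ?_ hmono
        rcases (hrelB.mul_left (monProd F (p' ++ q))) with h | h
        · exact Or.inl (by simpa using (TI F m).neg_mem h)
        · exact Or.inr (by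
            have e : monProd F (p' ++ q) * pairProd ((insert x (insert c J0)).sort (· ≤ ·))
                + monProd F (p' ++ q) * pairProd (J0.sort (· ≤ ·) ++ [x, c])
                = monProd F (p' ++ q) * pairProd (J0.sort (· ≤ ·) ++ [x, c])
                + monProd F (p' ++ q) * pairProd ((insert x (insert c J0)).sort (· ≤ ·)) := by
              abel
            rw [e]; exact h)
      have epair : pairProd (F := F) (J0.sort (· ≤ ·) ++ [x, c])
          = pairProd (J0.sort (· ≤ ·)) * cm F m x c := by
        rw [pairProd_append _ (by rw [Finset.length_sort]; exact heven)]
        rw [pairProd_cons]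
        simp
      have hterm2 : monProd F p' * cm F m x c * monProd F q * pairProd (J0.sort (· ≤ ·)) ∈
          Tsub F (p' ++ x :: c :: q).toFinset J0 := by
        refine Tsub_congr' ?_ hmemB
        rw [epair]
        have e2 : monProd F (p' ++ q) * (pairProd (J0.sort (· ≤ ·)) * cm F m x c)
            = monProd F p' * (monProd F q * pairProd (J0.sort (· ≤ ·)) * cm F m x c) := by
          rw [monProd_append]; noncomm_ring
        have e3 : monProd F p' * cm F m x c * monProd F q * pairProd (J0.sort (· ≤ ·))
            = monProd F p' * cm F m x c * (monProd F q * pairProd (J0.sort (· ≤ ·))) := by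
          noncomm_ring
        rw [e2, e3]
        have := moveComm (monProd F p') (monProd F q * pairProd (J0.sort (· ≤ ·))) x c
        have e4 : monProd F p' * (monProd F q * pairProd (J0.sort (· ≤ ·)) * cm F m x c)
            = monProd F p' * (monProd F q * pairProd (J0.sort (· ≤ ·)) * cm F m x c) := rfl
        -- goal : a*cm*(w) - p'*(w*cm) ∈ TI
        have e5 : monProd F p' * cm F m x c * (monProd F q * pairProd (J0.sort (· ≤ ·)))
            - monProd F p' * (monProd F q * pairProd (J0.sort (· ≤ ·)) * cm F m x c) ∈ TI F m :=
          moveComm _ _ _ _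
        have e6 : monProd F p' * (monProd F q * pairProd (J0.sort (· ≤ ·)) * cm F m x c)
            = monProd F p' * (monProd F q * pairProd (J0.sort (· ≤ ·)) * cm F m x c) := rfl
        exact e5
      -- combine
      rw [monSwap p' q x c, add_mul]
      exact Submodule.add_mem _ hterm1 hterm2


theorem main (lam : Equiv.Perm (Fin m) → F) :
    ∃ β : Finset (Fin m) → F,
      mlin lam - ∑ J ∈ Finset.univ.filter (fun J : Finset (Fin m) => Even J.card),
          β J • splitTerm J ∈ TI F m := by
  have hmem : mlin lam ∈ Tsub F Finset.univ (∅ : Finset (Fin m)) := by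
    rw [mlin]
    apply Submodule.sum_mem
    intro σ _
    apply Submodule.smul_mem
    have h := claimQ (F := F) (List.ofFn σ).length (List.ofFn σ) ∅ rfl
      (List.nodup_ofFn.2 σ.injective) (by simp) (by simp)
    simp only [Finset.sort_empty, pairProd_nil, mul_one] at h
    have huniv : (List.ofFn σ).toFinset = Finset.univ := by
      ext i
      simp only [List.mem_toFinset, List.mem_ofFn, Finset.mem_univ, iff_true]
      exact ⟨σ.symm i, by simp⟩
    rw [huniv] at h
    have e : (List.ofFn fun i => FreeAlgebra.ι F (σ i)).prod = monProd F (List.ofFn σ) := by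
      rw [monProd, List.map_ofFn]
      rfl
    rw [e]
    exact h
  rw [Tsub] at hmem
  rcases Submodule.mem_sup.1 hmem with ⟨i, hi, s, hs, hsum⟩
  classical
  set g : Finset (Fin m) → FreeAlgebra F (Fin m) :=
    fun D => if Even D.card then splitTerm D else 0 with hg
  have hsub : Tset F Finset.univ ∅ ⊆ Set.range g := by
    rintro z ⟨D, _, hDe, rfl⟩
    refine ⟨D, ?_⟩
    rw [hg]
    simp only [hDe, if_true]
    rw [splitTerm, Finset.compl_eq_univ_sdiff, Finset.empty_union, monProd]
  have hs' : s ∈ Submodule.span F (Set.range g) := Submodule.span_mono hsub hs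
  obtain ⟨cf, hcf⟩ := (Submodule.mem_span_range_iff_exists_fun F).1 hs'
  refine ⟨cf, ?_⟩
  have esum : ∑ J ∈ Finset.univ.filter (fun J : Finset (Fin m) => Even J.card),
      cf J • splitTerm J = s := by
    rw [← hcf]
    rw [Finset.sum_filter]
    apply Finset.sum_congr rfl
    intro D _
    by_cases hD : Even D.card
    · simp [hg, hD]
    · simp [hg, hD]
  rw [esum, ← hsum]
  simpa using hi

end GP

/-- Modulo the T-ideal generated by `[x₁,x₂,x₃]` (the identities of the Grassmann
algebra), every multilinear polynomial is a linear combination of the terms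
`x_{i₁}⋯x_{i_{m-2p}}[x_{j₁},x_{j₂}]⋯[x_{j_{2p-1}},x_{j_{2p}}]` over all splittings of the
variables into two increasing sequences. -/
theorem multilinear_mod_grassmann_identities
    (F : Type*) [Field F] [CharZero F] {m : ℕ} (lam : Equiv.Perm (Fin m) → F) :
    ∃ β : Finset (Fin m) → F,
      mlin lam - ∑ J ∈ Finset.univ.filter (fun J : Finset (Fin m) => Even J.card),
          β J • splitTerm J ∈
        TwoSidedIdeal.span
          {y : FreeAlgebra F (Fin m) |
            ∃ v : Fin 3 → FreeAlgebra F (Fin m), y = polyEval (tripleComm F) v} := by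
  exact GP.main lam
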